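/- Let v, x ∈ ℂ be such that θ̄′(0) ≠ 0, θ̄(x) ≠ 0 and, for every (k,l) ∈ {1,…,n}², both θ̄(v + (d/n)(kτ + l)) ≠ 0 and θ̄(v + (d/n)(kτ + l) + x) ≠ 0. Then the linear map Mat_n(ℂ) → Mat_n(ℂ) given by W ↦ ∑_{(k,l) ∈ {1,…,n}²} exp(2πi d k x / n) · σ(v + (d/n)(kτ + l), x) · tr(Z^∨_{(k,l)} W) · Z_{(k,l)} is a ℂ-linear isomorphism; that is, the tensor r(v; x₁, x₂) with x = x₂ − x₁ is non-degenerate. -/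

import Mathlib

open Complex Matrix
open scoped Kronecker

noncomputable section

/-- `ε = exp(2πi d/n)`. -/
def eps (n d : ℕ) : ℂ := Complex.exp (2 * Real.pi * Complex.I * d / n)

/-- The diagonal matrix `X = diag(1, ε, ε², …, ε^{n−1})`. -/
def Xmat (n d : ℕ) : Matrix (Fin n) (Fin n) ℂ :=
  Matrix.diagonal fun i => eps n d ^ (i : ℕ)

/-- The cyclic shift matrix `Y` with `Y_{i,j} = 1` iff `j ≡ i+1 (mod n)`. -/
def Ymat (n : ℕ) : Matrix (Fin n) (Fin n) ℂ :=
  Matrix.of fun i j => if (j : ℕ) = ((i : ℕ) + 1) % n then 1 else 0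

/-- `Z_{(k,l)} = Y^k X^{−l}`. -/
def Zmat (n d : ℕ) (k l : ℕ) : Matrix (Fin n) (Fin n) ℂ :=
  Ymat n ^ k * (Xmat n d)⁻¹ ^ l

/-- `Z^∨_{(k,l)} = (1/n) X^l Y^{−k}`. -/
def Zdual (n d : ℕ) (k l : ℕ) : Matrix (Fin n) (Fin n) ℂ :=
  (n : ℂ)⁻¹ • (Xmat n d ^ l * (Ymat n)⁻¹ ^ k)

/-- The third Jacobi theta function `θ(z) = ∑_{m ∈ ℤ} exp(πiτm² + 2πimz)`. -/
def theta3 (τ z : ℂ) : ℂ :=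
  ∑' m : ℤ, Complex.exp (Real.pi * Complex.I * τ * (m : ℂ) ^ 2 +
    2 * Real.pi * Complex.I * (m : ℂ) * z)

/-- The first Jacobi theta function
`θ̄(z) = 2 exp(πiτ/4) ∑_{m ≥ 0} (−1)^m exp(πiτ m(m+1)) sin((2m+1)πz)`. -/
def theta1 (τ z : ℂ) : ℂ :=
  2 * Complex.exp (Real.pi * Complex.I * τ / 4) *
    ∑' m : ℕ, (-1 : ℂ) ^ m * Complex.exp (Real.pi * Complex.I * τ * (m : ℂ) * ((m : ℂ) + 1)) *
      Complex.sin ((2 * (m : ℂ) + 1) * Real.pi * z)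

/-- The Kronecker elliptic function `σ(u, z) = θ̄′(0) θ̄(u+z) / (θ̄(u) θ̄(z))`. -/
def sigmaK (τ u z : ℂ) : ℂ :=
  deriv (theta1 τ) 0 * theta1 τ (u + z) / (theta1 τ u * theta1 τ z)

open Fin.NatCast

section aux
variable (n : ℕ) [NeZero n]

/-- shift matrix -/
def shiftM (c : Fin n) : Matrix (Fin n) (Fin n) ℂ :=
  Matrix.of fun i j => if j = i + c then 1 else 0

lemma shiftM_mul (a b : Fin n) : shiftM n a * shiftM n b = shiftM n (a + b) := by
  ext i j
  simp only [shiftM, Matrix.mul_apply, Matrix.of_apply, ite_mul, one_mul, zero_mul]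
  rw [Finset.sum_ite_eq' Finset.univ (i + a)]
  simp [add_assoc]

lemma shiftM_zero : shiftM n 0 = 1 := by
  ext i j
  simp [shiftM, Matrix.one_apply, eq_comm]

lemma Ymat_eq : Ymat n = shiftM n 1 := by
  ext i j
  have : ((i + 1 : Fin n) : ℕ) = ((i : ℕ) + 1) % n := by
    rw [Fin.add_def]
    simp [Fin.val_one', Nat.add_mod]
  simp only [Ymat, shiftM, Matrix.of_apply, ← this, Fin.val_eq_val]

lemma shiftM_pow (c : Fin n) (k : ℕ) : shiftM n c ^ k = shiftM n (k • c) := by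
  induction k with
  | zero => simp [shiftM_zero]
  | succ k ih => rw [pow_succ, ih, shiftM_mul, succ_nsmul]

lemma Ymat_pow (k : ℕ) : Ymat n ^ k = shiftM n (k : Fin n) := by
  rw [Ymat_eq, shiftM_pow]
  congr 1
  simp [nsmul_eq_mul]

lemma Ymat_inv : (Ymat n)⁻¹ = shiftM n (-1) := by
  apply Matrix.inv_eq_right_inv
  rw [Ymat_eq, shiftM_mul, add_neg_cancel, shiftM_zero]

lemma Ymat_inv_pow (k : ℕ) : (Ymat n)⁻¹ ^ k = shiftM n (-(k : Fin n)) := by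
  rw [Ymat_inv, shiftM_pow, smul_neg]
  congr 2
  simp [nsmul_eq_mul]

end aux

section eps
variable (n d : ℕ) [NeZero n]

lemma eps_ne_zero : eps n d ≠ 0 := Complex.exp_ne_zero _

lemma eps_prim (hcop : Nat.gcd d n = 1) : IsPrimitiveRoot (eps n d) n := by
  have := Complex.isPrimitiveRoot_exp_of_coprime d n (NeZero.ne n) hcop
  convert this using 2
  unfold eps
  rw [mul_div_assoc]

lemma eps_pow_n (hcop : Nat.gcd d n = 1) : eps n d ^ n = 1 :=
  (eps_prim n d hcop).pow_eq_one

/-- geometric sum of an n-th root of unity over `Fin n` -/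
lemma root_sum (ζ : ℂ) (hζ : ζ ^ n = 1) :
    ∑ i : Fin n, ζ ^ (i : ℕ) = if ζ = 1 then (n : ℂ) else 0 := by
  rw [Fin.sum_univ_eq_sum_range]
  by_cases h : ζ = 1
  · simp [h]
  · rw [if_neg h, geom_sum_eq h, hζ, sub_self, zero_div]

lemma root_sum_shift (ζ : ℂ) (hζ : ζ ^ n = 1) :
    ∑ i : Fin n, ζ ^ ((i : ℕ) + 1) = if ζ = 1 then (n : ℂ) else 0 := by
  by_cases h : ζ = 1
  · simp [h]
  · have := root_sum n ζ hζ
    rw [if_neg h] at this ⊢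
    calc ∑ i : Fin n, ζ ^ ((i : ℕ) + 1) = ζ * ∑ i : Fin n, ζ ^ (i : ℕ) := by
          rw [Finset.mul_sum]; congr 1; ext i; ring
      _ = 0 := by rw [this, mul_zero]

end eps

section entries
variable (n d : ℕ) [NeZero n]

lemma Xmat_inv : (Xmat n d)⁻¹ = Matrix.diagonal fun i : Fin n => (eps n d ^ (i : ℕ))⁻¹ := by
  apply Matrix.inv_eq_right_inv
  rw [Xmat, Matrix.diagonal_mul_diagonal]
  convert Matrix.diagonal_one with i
  exact mul_inv_cancel₀ (pow_ne_zero _ (eps_ne_zero n d))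

lemma Zmat_apply (k l : ℕ) (i j : Fin n) :
    Zmat n d k l i j = if j = i + (k : Fin n) then ((eps n d ^ (j : ℕ))⁻¹) ^ l else 0 := by
  rw [Zmat, Xmat_inv, Matrix.diagonal_pow, Ymat_pow, Matrix.mul_diagonal]
  simp [shiftM, ite_mul]

lemma Zdual_apply (k l : ℕ) (i j : Fin n) :
    Zdual n d k l i j
      = (n : ℂ)⁻¹ * if j = i + (-(k : Fin n)) then (eps n d ^ (i : ℕ)) ^ l else 0 := by
  rw [Zdual, Xmat, Matrix.diagonal_pow, Ymat_inv_pow, Matrix.smul_apply,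
    Matrix.diagonal_mul]
  simp [shiftM, mul_ite, smul_eq_mul]

lemma trace_Zdual_mul (k l : ℕ) (W : Matrix (Fin n) (Fin n) ℂ) :
    Matrix.trace (Zdual n d k l * W)
      = (n : ℂ)⁻¹ * ∑ i : Fin n, (eps n d ^ (i : ℕ)) ^ l * W (i + (-(k : Fin n))) i := by
  rw [Matrix.trace, Finset.mul_sum]
  congr 1; ext i
  rw [Matrix.diag_apply, Matrix.mul_apply]
  calc ∑ j : Fin n, Zdual n d k l i j * W j i
      = ∑ j : Fin n, (if j = i + (-(k : Fin n))
          then (n : ℂ)⁻¹ * ((eps n d ^ (i : ℕ)) ^ l * W j i) else 0) := by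
        congr 1; ext j
        rw [Zdual_apply]
        by_cases h : j = i + (-(k : Fin n)) <;> simp [h] <;> ring
    _ = (n : ℂ)⁻¹ * ((eps n d ^ (i : ℕ)) ^ l * W (i + (-(k : Fin n))) i) := by
        rw [Finset.sum_ite_eq' Finset.univ]; simp

end entries

section key
variable (n d : ℕ) [NeZero n]

lemma cast1 (m : Fin n) : ((m.1 + 1 : ℕ) : Fin n) = m + 1 := by
  push_cast
  simp [Fin.cast_val_eq_self]

lemma eps_pow_succ_inj (hcop : Nat.gcd d n = 1) (a b : Fin n) :
    eps n d ^ ((a : ℕ) + 1) = eps n d ^ ((b : ℕ) + 1) ↔ a = b := by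
  constructor
  · intro h
    rw [pow_succ, pow_succ] at h
    exact Fin.ext ((eps_prim n d hcop).pow_inj a.isLt b.isLt
      (mul_right_cancel₀ (eps_ne_zero n d) h))
  · rintro rfl; rfl

lemma orth (hcop : Nat.gcd d n = 1) (p q : Fin n × Fin n) :
    Matrix.trace (Zdual n d (p.1.1 + 1) (p.2.1 + 1) * Zmat n d (q.1.1 + 1) (q.2.1 + 1))
      = if p = q then 1 else 0 := by
  have hn : (n : ℂ) ≠ 0 := by exact_mod_cast (NeZero.ne n)
  rw [trace_Zdual_mul]
  have hcond : ∀ i : Fin n, (i = i + -(p.1 + 1) + (q.1 + 1)) ↔ q.1 = p.1 := by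
    intro i
    rw [add_assoc, left_eq_add, neg_add_eq_zero]
    exact ⟨fun h => (add_right_cancel h).symm, fun h => by rw [h]⟩
  have step : ∀ i : Fin n,
      (eps n d ^ (i : ℕ)) ^ (p.2.1 + 1) * Zmat n d (q.1.1 + 1) (q.2.1 + 1) (i + -(↑(p.1.1 + 1) : Fin n)) i
      = if q.1 = p.1
          then (eps n d ^ (p.2.1 + 1) * (eps n d ^ (q.2.1 + 1))⁻¹) ^ (i : ℕ) else 0 := by
    intro i
    rw [Zmat_apply, cast1, cast1]
    simp only [hcond i]
    by_cases h : q.1 = p.1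
    · rw [if_pos h, if_pos h, pow_right_comm, inv_pow,
        pow_right_comm (eps n d) (i : ℕ) (q.2.1 + 1), ← inv_pow, ← mul_pow]
    · rw [if_neg h, if_neg h, mul_zero]
  rw [Finset.sum_congr rfl fun i _ => step i]
  by_cases h1 : q.1 = p.1
  · simp only [if_pos h1]
    set ζ : ℂ := eps n d ^ (p.2.1 + 1) * (eps n d ^ (q.2.1 + 1))⁻¹ with hζ
    have hζn : ζ ^ n = 1 := by
      rw [hζ, mul_pow, inv_pow, pow_right_comm, eps_pow_n n d hcop, one_pow,
        pow_right_comm, eps_pow_n n d hcop, one_pow, inv_one, mul_one]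
    rw [root_sum n ζ hζn]
    have : (ζ = 1) ↔ p.2 = q.2 := by
      rw [hζ, mul_inv_eq_one₀ (pow_ne_zero _ (eps_ne_zero n d))]
      exact eps_pow_succ_inj n d hcop p.2 q.2
    by_cases h2 : p.2 = q.2
    · rw [if_pos (this.mpr h2), if_pos (Prod.ext h1.symm h2), inv_mul_cancel₀ hn]
    · rw [if_neg (fun hh => h2 (this.mp hh)), mul_zero,
        if_neg (fun hh => h2 (by rw [hh]))]
  · rw [if_neg (fun hh => h1 (by rw [hh]))]
    simp [h1]

end key

section comp
variable (n d : ℕ) [NeZero n]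

lemma complete (hcop : Nat.gcd d n = 1) (W : Matrix (Fin n) (Fin n) ℂ) :
    ∑ p : Fin n × Fin n,
      Matrix.trace (Zdual n d (p.1.1 + 1) (p.2.1 + 1) * W) • Zmat n d (p.1.1 + 1) (p.2.1 + 1)
      = W := by
  have hn : (n : ℂ) ≠ 0 := by exact_mod_cast (NeZero.ne n)
  ext a b
  rw [Matrix.sum_apply]
  set k0 : Fin n := b - a - 1 with hk0
  have key : ∀ p : Fin n × Fin n,
      (Matrix.trace (Zdual n d (p.1.1 + 1) (p.2.1 + 1) * W) • Zmat n d (p.1.1 + 1) (p.2.1 + 1)) a b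
      = if p.1 = k0 then
          (n : ℂ)⁻¹ * ∑ i : Fin n,
            (eps n d ^ (i : ℕ) * (eps n d ^ (b : ℕ))⁻¹) ^ (p.2.1 + 1) * W (i + -(b - a)) i
        else 0 := by
    intro p
    rw [Matrix.smul_apply, Zmat_apply, cast1, smul_eq_mul]
    have hiff : (b = a + (p.1 + 1)) ↔ p.1 = k0 := by
      rw [hk0]
      constructor
      · intro h; rw [h]; abel
      · intro h; rw [h]; abel
    by_cases h : p.1 = k0
    · rw [if_pos (hiff.mpr h), if_pos h, trace_Zdual_mul, cast1, mul_assoc, Finset.sum_mul]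
      congr 1
      apply Finset.sum_congr rfl
      intro i _
      have hba : b - a = p.1 + 1 := by rw [hiff.mpr h]; abel
      rw [hba, mul_pow]
      ring
    · rw [if_neg (fun hh => h (hiff.mp hh)), if_neg h, mul_zero]
  rw [Finset.sum_congr rfl fun p _ => key p, Fintype.sum_prod_type]
  have collapse : ∀ p1 : Fin n, (∑ p2 : Fin n, if p1 = k0 then
        (n : ℂ)⁻¹ * ∑ i : Fin n,
          (eps n d ^ (i : ℕ) * (eps n d ^ (b : ℕ))⁻¹) ^ (p2.1 + 1) * W (i + -(b - a)) i
        else 0)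
      = if p1 = k0 then (n : ℂ)⁻¹ * ∑ i : Fin n,
          (∑ p2 : Fin n, (eps n d ^ (i : ℕ) * (eps n d ^ (b : ℕ))⁻¹) ^ (p2.1 + 1))
            * W (i + -(b - a)) i else 0 := by
    intro p1
    by_cases h : p1 = k0
    · rw [if_pos h]
      simp only [if_pos h]
      rw [← Finset.mul_sum, Finset.sum_comm]
      congr 1
      apply Finset.sum_congr rfl
      intro i _
      rw [Finset.sum_mul]
    · simp [h]
  rw [Finset.sum_congr rfl fun p1 _ => collapse p1, Finset.sum_ite_eq' Finset.univ k0,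
    if_pos (Finset.mem_univ k0)]
  have hchar : ∀ i : Fin n,
      (∑ p2 : Fin n, (eps n d ^ (i : ℕ) * (eps n d ^ (b : ℕ))⁻¹) ^ (p2.1 + 1))
        * W (i + -(b - a)) i
      = if i = b then (n : ℂ) * W (i + -(b - a)) i else 0 := by
    intro i
    set ζ : ℂ := eps n d ^ (i : ℕ) * (eps n d ^ (b : ℕ))⁻¹ with hζ
    have hζn : ζ ^ n = 1 := by
      rw [hζ, mul_pow, inv_pow, pow_right_comm, eps_pow_n n d hcop, one_pow,
        pow_right_comm, eps_pow_n n d hcop, one_pow, inv_one, mul_one]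
    rw [root_sum_shift n ζ hζn]
    have hone : (ζ = 1) ↔ i = b := by
      rw [hζ, mul_inv_eq_one₀ (pow_ne_zero _ (eps_ne_zero n d))]
      exact ⟨fun h => Fin.ext ((eps_prim n d hcop).pow_inj i.isLt b.isLt h),
        fun h => by rw [h]⟩
    by_cases h : i = b
    · rw [if_pos (hone.mpr h), if_pos h]
    · rw [if_neg (fun hh => h (hone.mp hh)), if_neg h, zero_mul]
  rw [Finset.sum_congr rfl fun i _ => hchar i, Finset.sum_ite_eq' Finset.univ b,
    if_pos (Finset.mem_univ b)]
  rw [← mul_assoc, inv_mul_cancel₀ hn, one_mul]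
  congr 1
  abel

end comp

section fmap
variable (n d : ℕ) [NeZero n]

def Fmap (c : Fin n × Fin n → ℂ) :
    Matrix (Fin n) (Fin n) ℂ →ₗ[ℂ] Matrix (Fin n) (Fin n) ℂ where
  toFun W := ∑ p : Fin n × Fin n,
    (c p * Matrix.trace (Zdual n d (p.1.1 + 1) (p.2.1 + 1) * W)) • Zmat n d (p.1.1 + 1) (p.2.1 + 1)
  map_add' W1 W2 := by
    rw [← Finset.sum_add_distrib]
    exact Finset.sum_congr rfl fun p _ => by
      rw [Matrix.mul_add, Matrix.trace_add, mul_add, add_smul]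
  map_smul' r W := by
    simp only [RingHom.id_apply, Finset.smul_sum]
    exact Finset.sum_congr rfl fun p _ => by
      rw [Matrix.mul_smul, Matrix.trace_smul, smul_eq_mul, smul_smul, mul_left_comm]

lemma Fmap_apply (c : Fin n × Fin n → ℂ) (W : Matrix (Fin n) (Fin n) ℂ) :
    Fmap n d c W = ∑ p : Fin n × Fin n,
      (c p * Matrix.trace (Zdual n d (p.1.1 + 1) (p.2.1 + 1) * W)) •
        Zmat n d (p.1.1 + 1) (p.2.1 + 1) := rfl

lemma Fmap_Fmap (hcop : Nat.gcd d n = 1) (c c' : Fin n × Fin n → ℂ)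
    (h : ∀ p, c p * c' p = 1) (W : Matrix (Fin n) (Fin n) ℂ) :
    Fmap n d c (Fmap n d c' W) = W := by
  have tr_eval : ∀ p : Fin n × Fin n,
      Matrix.trace (Zdual n d (p.1.1 + 1) (p.2.1 + 1) * Fmap n d c' W)
        = c' p * Matrix.trace (Zdual n d (p.1.1 + 1) (p.2.1 + 1) * W) := by
    intro p
    rw [Fmap_apply, Matrix.mul_sum, Matrix.trace_sum]
    have : ∀ q : Fin n × Fin n,
        Matrix.trace (Zdual n d (p.1.1 + 1) (p.2.1 + 1) *
          ((c' q * Matrix.trace (Zdual n d (q.1.1 + 1) (q.2.1 + 1) * W)) •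
            Zmat n d (q.1.1 + 1) (q.2.1 + 1)))
        = if p = q then c' q * Matrix.trace (Zdual n d (q.1.1 + 1) (q.2.1 + 1) * W) else 0 := by
      intro q
      rw [Matrix.mul_smul, Matrix.trace_smul, smul_eq_mul, orth n d hcop p q]
      by_cases h2 : p = q
      · rw [if_pos h2, if_pos h2, mul_one]
      · rw [if_neg h2, if_neg h2, mul_zero]
    rw [Finset.sum_congr rfl fun q _ => this q, Finset.sum_ite_eq Finset.univ p,
      if_pos (Finset.mem_univ p)]
  rw [Fmap_apply]
  calc ∑ p : Fin n × Fin n,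
      (c p * Matrix.trace (Zdual n d (p.1.1 + 1) (p.2.1 + 1) * Fmap n d c' W)) •
        Zmat n d (p.1.1 + 1) (p.2.1 + 1)
      = ∑ p : Fin n × Fin n,
        Matrix.trace (Zdual n d (p.1.1 + 1) (p.2.1 + 1) * W) • Zmat n d (p.1.1 + 1) (p.2.1 + 1) := by
        refine Finset.sum_congr rfl fun p _ => ?_
        rw [tr_eval p, ← mul_assoc, h p, one_mul]
    _ = W := complete n d hcop W

end fmap

/-- Non-degeneracy of the elliptic solution of AYBE: the associated linear map
`W ↦ ∑ c_{(k,l)}(v;x) tr(Z^∨_{(k,l)} W) Z_{(k,l)}` is a `ℂ`-linear automorphism. -/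
theorem stmt16 (n d : ℕ) (hd : 0 < d) (hdn : d < n) (hcop : Nat.gcd d n = 1)
    (τ : ℂ) (hτ : 0 < τ.im) (v x : ℂ)
    (h0 : deriv (theta1 τ) 0 ≠ 0) (hx : theta1 τ x ≠ 0)
    (hpol : ∀ k l : ℕ, 1 ≤ k → k ≤ n → 1 ≤ l → l ≤ n →
      theta1 τ (v + ((d : ℂ) / n) * (k * τ + l)) ≠ 0 ∧
      theta1 τ (v + ((d : ℂ) / n) * (k * τ + l) + x) ≠ 0) :
    ∃ e : Matrix (Fin n) (Fin n) ℂ ≃ₗ[ℂ] Matrix (Fin n) (Fin n) ℂ,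
      ∀ W : Matrix (Fin n) (Fin n) ℂ,
        e W = ∑ p : Fin n × Fin n,
          (Complex.exp (2 * Real.pi * Complex.I * d * ((p.1.1 : ℂ) + 1) * x / n) *
            sigmaK τ (v + ((d : ℂ) / n) * (((p.1.1 : ℂ) + 1) * τ + ((p.2.1 : ℂ) + 1))) x *
            Matrix.trace (Zdual n d (p.1.1 + 1) (p.2.1 + 1) * W)) •
            Zmat n d (p.1.1 + 1) (p.2.1 + 1) := by
  haveI : NeZero n := ⟨by omega⟩
  set c : Fin n × Fin n → ℂ := fun p =>
    Complex.exp (2 * Real.pi * Complex.I * d * ((p.1.1 : ℂ) + 1) * x / n) *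
      sigmaK τ (v + ((d : ℂ) / n) * (((p.1.1 : ℂ) + 1) * τ + ((p.2.1 : ℂ) + 1))) x with hc
  have hcne : ∀ p, c p ≠ 0 := by
    intro p
    have hp := hpol (p.1.1 + 1) (p.2.1 + 1) (Nat.le_add_left 1 _) (by omega)
      (Nat.le_add_left 1 _) (by omega)
    have hcast : v + ((d : ℂ) / n) * ((((p.1.1 + 1 : ℕ)) : ℂ) * τ + ((p.2.1 + 1 : ℕ) : ℂ))
        = v + ((d : ℂ) / n) * (((p.1.1 : ℂ) + 1) * τ + ((p.2.1 : ℂ) + 1)) := by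
      push_cast; ring
    rw [hcast] at hp
    refine mul_ne_zero (Complex.exp_ne_zero _) ?_
    rw [sigmaK]
    exact div_ne_zero (mul_ne_zero h0 hp.2) (mul_ne_zero hp.1 hx)
  refine ⟨LinearEquiv.ofLinear (Fmap n d c) (Fmap n d fun p => (c p)⁻¹)
    (LinearMap.ext fun W => Fmap_Fmap n d hcop _ _ (fun p => mul_inv_cancel₀ (hcne p)) W)
    (LinearMap.ext fun W => Fmap_Fmap n d hcop _ _ (fun p => inv_mul_cancel₀ (hcne p)) W),
    fun W => ?_⟩
  show Fmap n d c W = _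
  rw [Fmap_apply]
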